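/- There exists a constant c > 0 and an integer N such that for all n ≥ N and all integers k, l satisfying 0.55 log log n ≤ k, 2k − 2 ≤ l, and l ≤ 1.6 log log n, one has ((log log n)^{k−1}/(k−1)!) · ((log log n)^{l−1}/(l−1)!) ≤ c · (log n)^{3·2^{−2/3}}. -/

import Mathlib

open Real

lemma phi_antitone {x y : ℝ} (hy : 1 ≤ y) (hxy : y ≤ x) :
    x * (1 - Real.log x) ≤ y * (1 - Real.log y) := by
  have hy0 : 0 < y := lt_of_lt_of_le one_pos hy
  have hx0 : 0 < x := lt_of_lt_of_le hy0 hxy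
  have h1 : Real.log (y / x) ≤ y / x - 1 := Real.log_le_sub_one_of_pos (by positivity)
  rw [Real.log_div hy0.ne' hx0.ne'] at h1
  have hly : 0 ≤ Real.log y := Real.log_nonneg hy
  have h2 : x * (Real.log y - Real.log x) ≤ y - x := by
    have h3 := mul_le_mul_of_nonneg_left h1 hx0.le
    have h4 : x * (y / x - 1) = y - x := by field_simp
    linarith [h3, h4]
  have h4 : 0 ≤ (x - y) * Real.log y := mul_nonneg (by linarith) hly
  nlinarith [h2, h4]

lemma key_ineq (a : ℝ) (ha : 0 < a) :
    a * (1 - Real.log a) + (2*a) * (1 - Real.log (2*a)) ≤ 3 * (2:ℝ) ^ (-(2:ℝ)/3) := by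
  set g : ℝ := (2:ℝ) ^ (-(2:ℝ)/3) with hg_def
  have hg : 0 < g := Real.rpow_pos_of_pos two_pos _
  obtain ⟨u, hu, hau⟩ : ∃ u : ℝ, 0 < u ∧ a = g * u := ⟨a / g, by positivity, by field_simp⟩
  have h1 : Real.log u⁻¹ ≤ u⁻¹ - 1 := Real.log_le_sub_one_of_pos (by positivity)
  rw [Real.log_inv] at h1
  have h2 : u * (1 - Real.log u) ≤ 1 := by
    have h3 := mul_le_mul_of_nonneg_left h1 hu.le
    rw [mul_sub, mul_inv_cancel₀ hu.ne'] at h3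
    nlinarith
  have hlogg : Real.log g = (-(2:ℝ)/3) * Real.log 2 := Real.log_rpow two_pos _
  have hloga : Real.log a = Real.log g + Real.log u := by
    rw [hau, Real.log_mul hg.ne' hu.ne']
  have hlog2a : Real.log (2*a) = Real.log 2 + Real.log a :=
    Real.log_mul two_ne_zero ha.ne'
  have hmain : a * (1 - Real.log a) + (2*a) * (1 - Real.log (2*a))
      = 3 * g * (u * (1 - Real.log u)) := by
    rw [hlog2a, hloga, hlogg, hau]; ring
  rw [hmain]
  nlinarith [mul_le_mul_of_nonneg_left h2 (by positivity : (0:ℝ) ≤ 3 * g)]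

lemma pow_div_fact_le (L : ℝ) (hL : 0 < L) (m : ℕ) (hm : 1 ≤ m) :
    L ^ m / (Nat.factorial m : ℝ) ≤ Real.exp ((m:ℝ) * (1 - Real.log ((m:ℝ)/L))) := by
  have hm0 : 0 < (m:ℝ) := by exact_mod_cast hm
  have hfact : 0 < (Nat.factorial m : ℝ) := by exact_mod_cast m.factorial_pos
  have h1 : (m:ℝ) ^ m / (Nat.factorial m : ℝ) ≤ Real.exp m :=
    Real.pow_div_factorial_le_exp _ hm0.le m
  have key : L ^ m / (Nat.factorial m : ℝ)
      = ((m:ℝ) ^ m / (Nat.factorial m : ℝ)) * (L / (m:ℝ)) ^ m := by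
    rw [div_pow]; field_simp
  have h2 : (L / (m:ℝ)) ^ m = Real.exp ((m:ℝ) * Real.log (L / (m:ℝ))) := by
    rw [Real.exp_nat_mul, Real.exp_log (show (0:ℝ) < L / m by positivity)]
  have h3 : Real.exp (m:ℝ) * Real.exp ((m:ℝ) * Real.log (L / (m:ℝ)))
      = Real.exp ((m:ℝ) * (1 - Real.log ((m:ℝ)/L))) := by
    rw [← Real.exp_add]; congr 1
    rw [Real.log_div hL.ne' hm0.ne', Real.log_div hm0.ne' hL.ne']; ring
  calc L ^ m / (Nat.factorial m : ℝ)
      = ((m:ℝ) ^ m / (Nat.factorial m : ℝ)) * (L / (m:ℝ)) ^ m := key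
    _ ≤ Real.exp m * (L / (m:ℝ)) ^ m :=
        mul_le_mul_of_nonneg_right h1 (by positivity)
    _ = Real.exp (m:ℝ) * Real.exp ((m:ℝ) * Real.log (L / (m:ℝ))) := by rw [h2]
    _ = _ := h3

lemma exponent_bound (L p q : ℝ) (hL : 100 ≤ L) (hp : 0.55 * L - 1 ≤ p)
    (hq : 2 * p + 1 ≤ q) :
    p * (1 - Real.log (p/L)) + q * (1 - Real.log (q/L)) ≤ (3 * (2:ℝ) ^ (-(2:ℝ)/3)) * L := by
  have hL0 : 0 < L := by linarith
  have hp0 : 0 < p := by linarith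
  have hq0 : 0 < q := by linarith
  set a := p / L with ha_def
  set b := q / L with hb_def
  have ha0 : 0 < a := by positivity
  have h2a1 : 1 ≤ 2 * a := by
    have h : L ≤ 2 * p := by linarith
    calc (1:ℝ) ≤ 2 * p / L := (one_le_div hL0).mpr h
      _ = 2 * (p / L) := mul_div_assoc 2 p L
  have hba : 2 * a ≤ b := by
    have h : 2 * p ≤ q := by linarith
    calc 2 * (p / L) = 2 * p / L := (mul_div_assoc 2 p L).symm
      _ ≤ q / L := by gcongr
  have hmono := phi_antitone h2a1 hba
  have hkey := key_ineq a ha0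
  have hsum : a * (1 - Real.log a) + b * (1 - Real.log b) ≤ 3 * (2:ℝ) ^ (-(2:ℝ)/3) := by
    linarith
  have hpa : p = a * L := by rw [ha_def]; exact (div_mul_cancel₀ p hL0.ne').symm
  have hqb : q = b * L := by rw [hb_def]; exact (div_mul_cancel₀ q hL0.ne').symm
  have hfin := mul_le_mul_of_nonneg_left hsum hL0.le
  rw [hpa, hqb]
  nlinarith [hfin]

/-- There are `c > 0` and `N` such that for all `n ≥ N` and all integers `k, l` with
`0.55 log log n ≤ k`, `2k - 2 ≤ l` and `l ≤ 1.6 log log n`, one has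
`((log log n)^{k-1}/(k-1)!) · ((log log n)^{l-1}/(l-1)!) ≤ c (log n)^{3 · 2^{-2/3}}`. -/
theorem loglog_pow_product_bound :
    ∃ c : ℝ, 0 < c ∧ ∃ N : ℕ, ∀ n : ℕ, N ≤ n → ∀ k l : ℕ,
      (0.55 : ℝ) * Real.log (Real.log n) ≤ (k : ℝ) →
      2 * (k : ℝ) - 2 ≤ (l : ℝ) →
      (l : ℝ) ≤ (1.6 : ℝ) * Real.log (Real.log n) →
      (Real.log (Real.log n) ^ (k - 1) / (Nat.factorial (k - 1) : ℝ)) *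
        (Real.log (Real.log n) ^ (l - 1) / (Nat.factorial (l - 1) : ℝ)) ≤
      c * Real.log n ^ ((3 : ℝ) * (2 : ℝ) ^ (-(2 : ℝ) / 3)) := by
  refine ⟨4, by norm_num, ⌈Real.exp (Real.exp 100)⌉₊, fun n hn k l hk hkl hl => ?_⟩
  have hn1 : Real.exp (Real.exp 100) ≤ (n : ℝ) :=
    le_trans (Nat.le_ceil _) (Nat.cast_le.mpr hn)
  have hlog1 : Real.exp 100 ≤ Real.log n := by
    rw [← Real.log_exp (Real.exp 100)]
    exact Real.log_le_log (Real.exp_pos _) hn1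
  have hlogn_pos : (0:ℝ) < Real.log n := lt_of_lt_of_le (Real.exp_pos 100) hlog1
  set L := Real.log (Real.log n) with hL_def
  have hL : (100:ℝ) ≤ L := by
    rw [hL_def, ← Real.log_exp (100:ℝ)]
    exact Real.log_le_log (Real.exp_pos _) hlog1
  have hL0 : (0:ℝ) < L := by linarith
  have hk55 : (55:ℝ) ≤ (k:ℝ) := by linarith
  have hk1 : 55 ≤ k := by exact_mod_cast hk55
  have hl108 : (108:ℝ) ≤ (l:ℝ) := by linarith
  have hl2 : 2 ≤ l := by exact_mod_cast le_trans (by norm_num : (2:ℝ) ≤ 108) hl108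
  have hkc : ((k - 1 : ℕ) : ℝ) = (k:ℝ) - 1 := by
    push_cast [Nat.cast_sub (show 1 ≤ k by omega)]; ring
  have hlc : ((l + 1 : ℕ) : ℝ) = (l:ℝ) + 1 := by push_cast; ring
  -- bound on first factor
  have hA := pow_div_fact_le L hL0 (k - 1) (by omega)
  -- convert second factor
  have hfac_pos : ∀ m : ℕ, (0:ℝ) < (Nat.factorial m : ℝ) := fun m => by
    exact_mod_cast m.factorial_pos
  have hBconv : L ^ (l - 1) / (Nat.factorial (l - 1) : ℝ)
      ≤ 4 * (L ^ (l + 1) / (Nat.factorial (l + 1) : ℝ)) := by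
    have hfac : ((Nat.factorial (l + 1) : ℕ) : ℝ)
        = ((l:ℝ) + 1) * ((l:ℝ) * (Nat.factorial (l - 1) : ℝ)) := by
      have e1 : Nat.factorial (l + 1) = (l + 1) * (l * Nat.factorial (l - 1)) := by
        rw [Nat.factorial_succ, Nat.mul_factorial_pred (by omega : l ≠ 0)]
      rw [e1]; push_cast; ring
    have epow : L ^ (l + 1) = L ^ (l - 1) * L ^ 2 := by
      rw [show l + 1 = (l - 1) + 2 by omega, pow_add]
    have hll : ((l:ℝ) + 1) * (l:ℝ) ≤ 4 * L ^ 2 := by nlinarith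
    rw [mul_div_assoc']
    rw [div_le_div_iff₀ (hfac_pos _) (hfac_pos _)]
    calc L ^ (l - 1) * (Nat.factorial (l + 1) : ℝ)
        = (L ^ (l - 1) * (Nat.factorial (l - 1) : ℝ)) * (((l:ℝ) + 1) * (l:ℝ)) := by
          rw [hfac]; ring
      _ ≤ (L ^ (l - 1) * (Nat.factorial (l - 1) : ℝ)) * (4 * L ^ 2) := by
          apply mul_le_mul_of_nonneg_left hll (by positivity)
      _ = 4 * L ^ (l + 1) * (Nat.factorial (l - 1) : ℝ) := by rw [epow]; ring
  have hB2 := pow_div_fact_le L hL0 (l + 1) (by omega)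
  have hB : L ^ (l - 1) / (Nat.factorial (l - 1) : ℝ)
      ≤ 4 * Real.exp (((l + 1 : ℕ):ℝ) * (1 - Real.log (((l + 1 : ℕ):ℝ) / L))) :=
    le_trans hBconv (by gcongr)
  -- exponent bound
  have hexp := exponent_bound L ((k - 1 : ℕ) : ℝ) ((l + 1 : ℕ) : ℝ) hL
    (by rw [hkc]; linarith) (by rw [hkc, hlc]; linarith)
  -- combine
  have hApos : (0:ℝ) ≤ L ^ (k - 1) / (Nat.factorial (k - 1) : ℝ) := by positivity
  calc (L ^ (k - 1) / (Nat.factorial (k - 1) : ℝ)) * (L ^ (l - 1) / (Nat.factorial (l - 1) : ℝ))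
      ≤ Real.exp (((k - 1 : ℕ):ℝ) * (1 - Real.log (((k - 1 : ℕ):ℝ) / L)))
        * (4 * Real.exp (((l + 1 : ℕ):ℝ) * (1 - Real.log (((l + 1 : ℕ):ℝ) / L)))) := by
        apply mul_le_mul hA hB (by positivity) (le_of_lt (Real.exp_pos _))
    _ = 4 * Real.exp (((k - 1 : ℕ):ℝ) * (1 - Real.log (((k - 1 : ℕ):ℝ) / L))
          + ((l + 1 : ℕ):ℝ) * (1 - Real.log (((l + 1 : ℕ):ℝ) / L))) := by
        rw [Real.exp_add]; ring
    _ ≤ 4 * Real.exp ((3 * (2:ℝ) ^ (-(2:ℝ)/3)) * L) := by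
        have := Real.exp_le_exp.mpr hexp
        linarith
    _ = 4 * Real.log n ^ ((3 : ℝ) * (2 : ℝ) ^ (-(2 : ℝ) / 3)) := by
        rw [Real.rpow_def_of_pos hlogn_pos]
        rw [← hL_def]
        ring_nf
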